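/- Let n ≥ 3 and write w = (w₁, w₂, w₃, w̃) ∈ ℂ³ × ℂ^{n−3}. Let σ₁(w) = Re(w₁w₂ + w₁·conj(w₃)), and suppose σ₁(w) < 0 and ‖w‖ < 1/10 (Euclidean norm). Set τ = conj(w₁) − conj(w₃), α = (w₁ − conj(w₂ − τ))/2, Σ = { ζ ∈ ℂ : |ζ − α|² ≤ |α|² − |w₁|² }, and φ_w(ζ) = ( ζ, |w₁|²/ζ + w₂ − conj(w₁), ζ − conj(τ), w̃ ). Then: (a) w₁ ≠ 0, Re(w₁(w₂ − τ)) + |w₁|² = σ₁(w) < 0, and Σ is a closed disc of positive radius containing w₁ in its interior and not containing 0; (b) φ_w(w₁) = w; (c) for every ζ ∈ Σ, σ₁(φ_w(ζ)) = |ζ − α|² − (|α|² − |w₁|²), so σ₁(φ_w(ζ)) ≤ 0 on Σ with equality exactly on the boundary circle; (d) ‖φ_w(ζ)‖ < 1 for every ζ on the boundary circle of Σ. -/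

import Mathlib

open Complex

noncomputable section

/-- `σ₁(w) = Re(w₁ w₂ + w₁ conj(w₃))` on `ℂ^n` (with `n = m + 3 ≥ 3`). -/
def sigma1 (m : ℕ) (w : EuclideanSpace ℂ (Fin (m + 3))) : ℝ :=
  (w 0 * w 1 + w 0 * (starRingEnd ℂ) (w 2)).re

private lemma nsq (z : ℂ) : ‖z‖^2 = z.re^2 + z.im^2 := by
  rw [Complex.sq_norm, Complex.normSq_apply]; ring

set_option maxHeartbeats 1000000 in
/-- The translated analytic disc attached to `N₁ \ {z₁ = 0}` through a
point `w` with `σ₁(w) < 0`, `‖w‖ < 1/10`: well-definedness, `φ_w(w₁) = w`, the formula for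
`σ₁ ∘ φ_w`, and the boundary bound `‖φ_w(ζ)‖ < 1`. -/
theorem analytic_disc_attached_to_N1 (m : ℕ) (w : EuclideanSpace ℂ (Fin (m + 3)))
    (hw : sigma1 m w < 0) (hwn : ‖w‖ < 1 / 10) :
    let τ : ℂ := (starRingEnd ℂ) (w 0) - (starRingEnd ℂ) (w 2)
    let α : ℂ := (w 0 - (starRingEnd ℂ) (w 1 - τ)) / 2
    let S : Set ℂ := {ζ : ℂ | ‖ζ - α‖ ^ 2 ≤ ‖α‖ ^ 2 - ‖w 0‖ ^ 2}
    let φ : ℂ → EuclideanSpace ℂ (Fin (m + 3)) := fun ζ =>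
      WithLp.toLp 2 (fun i => if i = 0 then ζ
        else if i = 1 then ((‖w 0‖ ^ 2 : ℝ) : ℂ) / ζ + w 1 - (starRingEnd ℂ) (w 0)
        else if i = 2 then ζ - (starRingEnd ℂ) τ
        else w i)
    -- (a)
    (w 0 ≠ 0) ∧ ((w 0 * (w 1 - τ)).re + ‖w 0‖ ^ 2 = sigma1 m w) ∧
    (‖w 0 - α‖ ^ 2 < ‖α‖ ^ 2 - ‖w 0‖ ^ 2) ∧ ((0 : ℂ) ∉ S) ∧
    -- (b)
    (φ (w 0) = w) ∧
    -- (c)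
    (∀ ζ ∈ S, sigma1 m (φ ζ) = ‖ζ - α‖ ^ 2 - (‖α‖ ^ 2 - ‖w 0‖ ^ 2)) ∧
    -- (d)
    (∀ ζ : ℂ, ‖ζ - α‖ ^ 2 = ‖α‖ ^ 2 - ‖w 0‖ ^ 2 → ‖φ ζ‖ < 1) := by
  intro τ α S φ
  have h10 : (1 : Fin (m+3)) ≠ 0 := by
    intro h; have := congrArg Fin.val h; simp at this
  have h20 : (2 : Fin (m+3)) ≠ 0 := by
    intro h; have := congrArg Fin.val h; simp [Nat.mod_eq_of_lt (show 2 < m+3 by omega)] at this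
  have h21 : (2 : Fin (m+3)) ≠ 1 := by
    intro h; have := congrArg Fin.val h; simp [Nat.mod_eq_of_lt (show 2 < m+3 by omega)] at this
  have hτ : τ = (starRingEnd ℂ) (w 0) - (starRingEnd ℂ) (w 2) := rfl
  have hα : α = (w 0 - (starRingEnd ℂ) (w 1 - τ)) / 2 := rfl
  have hαre : α.re = (2*(w 0).re - (w 1).re - (w 2).re)/2 := by
    rw [hα, hτ]; simp [Complex.div_re]; ring
  have hαim : α.im = (2*(w 0).im + (w 1).im - (w 2).im)/2 := by
    rw [hα, hτ]; simp [Complex.div_im]; ring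
  have hσco : sigma1 m w = (w 0).re*(w 1).re - (w 0).im*(w 1).im
      + ((w 0).re*(w 2).re + (w 0).im*(w 2).im) := by
    rw [sigma1]; simp [Complex.mul_re, Complex.add_re]
  -- (a1)
  have ha : w 0 ≠ 0 := by
    intro h
    rw [hσco, h] at hw
    simp at hw
  have ha' : 0 < ‖w 0‖ := norm_pos_iff.mpr ha
  -- (a2)
  have hσ : (w 0 * (w 1 - τ)).re + ‖w 0‖ ^ 2 = sigma1 m w := by
    rw [hτ, hσco, nsq]
    simp [Complex.mul_re, Complex.sub_re, Complex.sub_im]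
    ring
  -- (a3)
  have hint : ‖w 0 - α‖ ^ 2 < ‖α‖ ^ 2 - ‖w 0‖ ^ 2 := by
    have key : ‖α‖^2 - ‖w 0‖^2 - ‖w 0 - α‖^2 = -sigma1 m w := by
      rw [hσco]
      simp only [nsq, Complex.sub_re, Complex.sub_im, hαre, hαim]
      ring
    linarith
  -- (a4)
  have h0S : (0 : ℂ) ∉ S := by
    intro h
    have h' : ‖(0:ℂ) - α‖ ^ 2 ≤ ‖α‖ ^ 2 - ‖w 0‖ ^ 2 := h
    rw [zero_sub, norm_neg] at h'
    nlinarith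
  -- components of φ
  have hφ0 : ∀ ζ : ℂ, φ ζ 0 = ζ := fun ζ => by simp [φ]
  have hφ1 : ∀ ζ : ℂ, φ ζ 1 = ((‖w 0‖ ^ 2 : ℝ) : ℂ) / ζ + w 1 - (starRingEnd ℂ) (w 0) :=
    fun ζ => by simp [φ, h10]
  have hφ2 : ∀ ζ : ℂ, φ ζ 2 = ζ - (starRingEnd ℂ) τ := fun ζ => by simp [φ, h20, h21]
  have hφi : ∀ (ζ : ℂ) (i : Fin (m+3)), i ≠ 0 → i ≠ 1 → i ≠ 2 → φ ζ i = w i :=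
    fun ζ i hi0 hi1 hi2 => by simp [φ, hi0, hi1, hi2]
  have hcast : ((‖w 0‖^2 : ℝ) : ℂ) = w 0 * (starRingEnd ℂ) (w 0) := by
    push_cast; exact (RCLike.mul_conj (w 0)).symm
  -- (b)
  have hb : φ (w 0) = w := by
    ext i
    by_cases hi0 : i = 0
    · rw [hi0, hφ0]
    by_cases hi1 : i = 1
    · rw [hi1, hφ1, hcast, mul_comm, mul_div_assoc, div_self ha, mul_one]
      ring
    by_cases hi2 : i = 2
    · rw [hi2, hφ2, hτ, map_sub, Complex.conj_conj, Complex.conj_conj]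
      ring
    · exact hφi _ i hi0 hi1 hi2
  refine ⟨ha, hσ, hint, h0S, hb, ?_, ?_⟩
  -- (c)
  · intro ζ hζS
    have hζ0 : ζ ≠ 0 := fun h => h0S (h ▸ hζS)
    have step : ζ * (((‖w 0‖ ^ 2 : ℝ) : ℂ) / ζ + w 1 - (starRingEnd ℂ) (w 0))
        + ζ * (starRingEnd ℂ) (ζ - (starRingEnd ℂ) τ)
        = ((‖w 0‖^2 : ℝ) : ℂ) + ζ * (w 1 - (starRingEnd ℂ) (w 0) - τ)
          + ζ * (starRingEnd ℂ) ζ := by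
      rw [map_sub, Complex.conj_conj]
      field_simp
      ring
    have hre : sigma1 m (φ ζ) = ‖w 0‖^2 + (ζ * (w 1 - (starRingEnd ℂ) (w 0) - τ)).re
        + ‖ζ‖^2 := by
      rw [sigma1, hφ0, hφ1, hφ2, step]
      rw [Complex.add_re, Complex.add_re, Complex.ofReal_re, RCLike.mul_conj ζ]
      norm_cast
    rw [hre, hτ]
    simp only [nsq, Complex.mul_re, Complex.sub_re, Complex.sub_im, Complex.conj_re,
      Complex.conj_im, hαre, hαim]
    ring
  -- (d)
  · intro ζ hbd
    have hζ0 : ζ ≠ 0 := by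
      intro h
      rw [h, zero_sub, norm_neg] at hbd
      nlinarith
    have hnn : (0:ℝ) < ‖ζ‖ := norm_pos_iff.mpr hζ0
    have hsum : ∑ i, ‖w i‖^2 = ‖w‖^2 := by
      rw [EuclideanSpace.norm_eq, Real.sq_sqrt (Finset.sum_nonneg fun i _ => sq_nonneg _)]
    have hw2 : ‖w‖^2 < 1/100 := by nlinarith [norm_nonneg w]
    have hile : ∀ i, ‖w i‖ < 1/10 := by
      intro i
      have h1 : ‖w i‖^2 ≤ ∑ j, ‖w j‖^2 :=
        Finset.single_le_sum (f := fun j => ‖w j‖^2) (fun _ _ => sq_nonneg _)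
          (Finset.mem_univ i)
      rw [hsum] at h1
      nlinarith [norm_nonneg (w i)]
    have hra : ‖ζ - α‖ ≤ ‖α‖ := by
      nlinarith [norm_nonneg (ζ - α), norm_nonneg α, sq_nonneg ‖w 0‖]
    have hζle : ‖ζ‖ ≤ 2*‖α‖ := by
      have := norm_add_le (ζ - α) α
      rw [sub_add_cancel] at this
      linarith
    have hlow : ‖w 0‖^2 ≤ ‖ζ‖ * (2*‖α‖) := by
      have t : ‖α‖ ≤ ‖ζ‖ + ‖ζ - α‖ := by
        have := norm_sub_le ζ (ζ - α)
        simpa using this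
      nlinarith [norm_nonneg (ζ - α), norm_nonneg α]
    have hτn : ‖τ‖ ≤ ‖w 0‖ + ‖w 2‖ := by
      rw [hτ]
      refine (norm_sub_le _ _).trans ?_
      simp [RCLike.norm_conj]
    have hαn : ‖α‖ ≤ (‖w 0‖ + (‖w 1‖ + ‖τ‖))/2 := by
      rw [hα, norm_div, RCLike.norm_two]
      gcongr
      refine (norm_sub_le _ _).trans ?_
      rw [RCLike.norm_conj]
      gcongr
      exact norm_sub_le _ _
    have hα15 : ‖α‖ < 1/5 := by
      have := hile 0; have := hile 1; have := hile 2
      linarith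
    have hζb : ‖ζ‖ < 2/5 := by linarith
    -- component bounds
    have hc1 : ‖((‖w 0‖ ^ 2 : ℝ) : ℂ) / ζ + w 1 - (starRingEnd ℂ) (w 0)‖ < 3/5 := by
      have e : ‖((‖w 0‖ ^ 2 : ℝ) : ℂ) / ζ‖ = ‖w 0‖^2 / ‖ζ‖ := by
        rw [norm_div, Complex.norm_real, Real.norm_eq_abs, _root_.abs_of_nonneg (sq_nonneg ‖w 0‖)]
      have e2 : ‖w 0‖^2 / ‖ζ‖ ≤ 2*‖α‖ := by
        rw [div_le_iff₀ hnn]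
        linarith [hlow]
      refine lt_of_le_of_lt ((norm_sub_le _ _).trans (add_le_add (norm_add_le _ _) le_rfl)) ?_
      rw [e, RCLike.norm_conj]
      have := hile 0; have := hile 1
      linarith
    have hc2 : ‖ζ - (starRingEnd ℂ) τ‖ < 3/5 := by
      refine lt_of_le_of_lt (norm_sub_le _ _) ?_
      rw [RCLike.norm_conj]
      have := hile 0; have := hile 2
      linarith
    -- sum decomposition
    have hg : ∑ i, (‖φ ζ i‖^2 - ‖w i‖^2)
        = (‖φ ζ 0‖^2 - ‖w 0‖^2) + ((‖φ ζ 1‖^2 - ‖w 1‖^2) + (‖φ ζ 2‖^2 - ‖w 2‖^2)) := by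
      rw [← Finset.sum_subset (Finset.subset_univ ({0,1,2} : Finset (Fin (m+3))))
        (fun i _ hi => ?_)]
      · rw [Finset.sum_insert (by
            simp only [Finset.mem_insert, Finset.mem_singleton]
            exact not_or.mpr ⟨Ne.symm h10, Ne.symm h20⟩),
          Finset.sum_insert (by simp only [Finset.mem_singleton]; exact Ne.symm h21),
          Finset.sum_singleton]
      · simp only [Finset.mem_insert, Finset.mem_singleton, not_or] at hi
        rw [hφi ζ i hi.1 hi.2.1 hi.2.2]
        ring
    have hφsq : ‖φ ζ‖^2 = ∑ i, ‖φ ζ i‖^2 := by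
      rw [EuclideanSpace.norm_eq, Real.sq_sqrt (Finset.sum_nonneg fun i _ => sq_nonneg _)]
    have hdecomp : ‖φ ζ‖^2 = ‖w‖^2 + ∑ i, (‖φ ζ i‖^2 - ‖w i‖^2) := by
      rw [hφsq, ← hsum, ← Finset.sum_add_distrib]
      exact Finset.sum_congr rfl fun i _ => by ring
    rw [hg, hφ0, hφ1, hφ2] at hdecomp
    clear hb hφi h0S hint hσ
    have hfin : ‖φ ζ‖^2 < 1 := by
      rw [hdecomp]
      nlinarith [hile 0, hile 1, hile 2, norm_nonneg (w 0), norm_nonneg (w 1),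
        norm_nonneg (w 2), norm_nonneg ζ,
        norm_nonneg (((‖w 0‖ ^ 2 : ℝ) : ℂ) / ζ + w 1 - (starRingEnd ℂ) (w 0)),
        norm_nonneg (ζ - (starRingEnd ℂ) τ)]
    nlinarith [norm_nonneg (φ ζ)]
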